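/- Let β : K → ℕ be tentative replacement times of a finite set K of working individuals, sorted as β(K'[1]) ≤ ... ≤ β(K'[k]). For any window length ι ≥ 0, the greedy partition that starts a new group at the first unassigned individual and assigns to it all subsequent individuals whose tentative time is within ι of the group leader's time yields a partition of K' into consecutive intervals; moreover within each group, max β − min β ≤ ι. -/
import Mathlib


/-- Shifting-window grouping of the Grouping Rule: for tentative replacement times `β`
sorted over positions `1,…,k`, and any window length `ι`, the greedy procedure yields a
partition of `{1,…,k}` into consecutive intervals (blocks `[b j, b (j+1))` with `b 0 = 1`
and `b m = k+1`) such that every member of a block lies within `ι` of the block leader,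
each new block leader lies strictly beyond the previous leader's window, and within each
block the spread `max β − min β` is at most `ι`. -/
theorem greedy_window_partition (k ι : ℕ) (β : ℕ → ℕ) (hk : 1 ≤ k)
    (hsorted : ∀ p q, 1 ≤ p → p ≤ q → q ≤ k → β p ≤ β q) :
    ∃ (m : ℕ) (b : ℕ → ℕ), 0 < m ∧ b 0 = 1 ∧ b m = k + 1 ∧
      (∀ j, j < m → b j < b (j + 1)) ∧
      (∀ j, j < m → ∀ p, b j ≤ p → p < b (j + 1) → β p ≤ β (b j) + ι) ∧
      (∀ j, j + 1 < m → β (b j) + ι < β (b (j + 1))) ∧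
      (∀ j, j < m → ∀ p q, b j ≤ p → p < b (j + 1) → b j ≤ q → q < b (j + 1) →
        β q - β p ≤ ι) := by
  suffices h : ∀ n s, 1 ≤ s → s ≤ k → k + 1 - s ≤ n →
      ∃ (m : ℕ) (b : ℕ → ℕ), 0 < m ∧ b 0 = s ∧ b m = k + 1 ∧
        (∀ j, j < m → b j < b (j + 1)) ∧
        (∀ j, j < m → ∀ p, b j ≤ p → p < b (j + 1) → β p ≤ β (b j) + ι) ∧
        (∀ j, j + 1 < m → β (b j) + ι < β (b (j + 1))) ∧
        (∀ j, j < m → ∀ p q, b j ≤ p → p < b (j + 1) → b j ≤ q → q < b (j + 1) →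
          β q - β p ≤ ι) by
    exact h (k + 1) 1 le_rfl hk (by omega)
  intro n
  induction n with
  | zero => intro s h1 h2 h3; omega
  | succ n ih =>
    intro s h1 h2 h3
    by_cases hex : ∃ t, s < t ∧ t ≤ k ∧ β s + ι < β t
    · obtain ⟨hst, htk, hβt⟩ := Nat.find_spec hex
      set t₀ := Nat.find hex with ht₀def
      have hmin : ∀ p, s < p → p < t₀ → β p ≤ β s + ι := by
        intro p hsp hpt
        have := Nat.find_min hex hpt
        push_neg at this
        exact this hsp (by omega)
      obtain ⟨m, b, hm, hb0, hbm, hinc, hwin, hgap, hspr⟩ :=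
        ih t₀ (by omega) htk (by omega)
      refine ⟨m + 1, fun j => Nat.rec s (fun i _ => b i) j, by omega, rfl, hbm, ?_, ?_, ?_, ?_⟩
      · rintro (_ | i) hj
        · show s < b 0; rw [hb0]; exact hst
        · exact hinc i (by omega)
      · rintro (_ | i) hj p hp1 hp2
        · show β p ≤ β s + ι
          have hp2' : p < t₀ := by rw [← hb0]; exact hp2
          rcases eq_or_lt_of_le hp1 with h | h
          · rw [← h]; exact Nat.le_add_right (β s) ι
          · exact hmin p h hp2'
        · exact hwin i (by omega) p hp1 hp2
      · rintro (_ | i) hj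
        · show β s + ι < β (b 0); rw [hb0]; exact hβt
        · exact hgap i (by omega)
      · rintro (_ | i) hj p q hp1 hp2 hq1 hq2
        · have hp2' : p < t₀ := by rw [← hb0]; exact hp2
          have hq2' : q < t₀ := by rw [← hb0]; exact hq2
          have hq : β q ≤ β s + ι := by
            rcases eq_or_lt_of_le hq1 with h | h
            · rw [← h]; exact Nat.le_add_right (β s) ι
            · exact hmin q h hq2'
          have hp : β s ≤ β p := hsorted s p h1 hp1 (by omega)
          omega
        · exact hspr i (by omega) p q hp1 hp2 hq1 hq2
    · push_neg at hex
      have hw : ∀ p, s ≤ p → p ≤ k → β p ≤ β s + ι := by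
        intro p hp1 hp2
        rcases eq_or_lt_of_le hp1 with h | h
        · rw [← h]; exact Nat.le_add_right (β s) ι
        · exact hex p h hp2
      refine ⟨1, fun j => Nat.rec s (fun _ _ => k + 1) j, one_pos, rfl, rfl, ?_, ?_, ?_, ?_⟩
      · rintro (_ | i) hj
        · show s < k + 1; omega
        · omega
      · rintro (_ | i) hj p hp1 hp2
        · exact hw p hp1 (by exact Nat.lt_succ_iff.mp hp2)
        · omega
      · intro j hj; omega
      · rintro (_ | i) hj p q hp1 hp2 hq1 hq2
        · have hq : β q ≤ β s + ι := hw q hq1 (Nat.lt_succ_iff.mp hq2)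
          have hp : β s ≤ β p := hsorted s p h1 hp1 (by exact Nat.lt_succ_iff.mp hp2)
          omega
        · omega
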